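/- Under the assumptions of the one-sided dilation formulas for a nondecreasing, locally concave signal u : ℤ → ℝ, the increments of the dilated signals satisfy δ_{2r}[u]_i − δ_{2r}[u]_{i−1} ≤ δ_r[u]_i − δ_r[u]_{i−1}, provided 0 < r ≤ h. -/
import Mathlib

/-- For a nondecreasing, locally concave signal, the increments of the
dilated signals satisfy
`δ_{2r}[u]_i − δ_{2r}[u]_{i−1} ≤ δ_r[u]_i − δ_r[u]_{i−1}`. -/
theorem dilated_increments_ordered (u : ℤ → ℝ)
    (hmono : ∀ j : ℤ, u (j - 1) ≤ u j)
    (hconc : ∀ j : ℤ, u (j + 1) - u j ≤ u j - u (j - 1))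
    (r h : ℝ) (hh : 0 < h) (hr : 0 < r) (hrh : r ≤ h) (i : ℤ) :
    (u i + (2 * r / h) * (u (i + 1) - u i)
        + (r ^ 2 / h ^ 2) * (u (i + 2) - 2 * u (i + 1) + u i))
      - (u (i - 1) + (2 * r / h) * (u i - u (i - 1))
        + (r ^ 2 / h ^ 2) * (u (i + 1) - 2 * u i + u (i - 1)))
      ≤ (u i + (r / h) * (u (i + 1) - u i))
        - (u (i - 1) + (r / h) * (u i - u (i - 1))) := by
  have h1 := hconc i
  have h2 := hconc (i + 1)
  simp only [add_sub_cancel_right] at h2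
  have hq : (0:ℝ) < h ^ 2 := by positivity
  have h2' : u (i + 2) - u (i + 1) ≤ u (i + 1) - u i := by
    have : i + 1 + 1 = i + 2 := by ring
    rwa [this] at h2
  rw [div_mul_eq_mul_div, div_mul_eq_mul_div, div_mul_eq_mul_div, div_mul_eq_mul_div,
    div_mul_eq_mul_div, div_mul_eq_mul_div, ← sub_nonneg]
  have key : (0:ℝ) ≤ (r * (h - r) * ((u i - u (i-1)) - (u (i+1) - u i))
      + r * r * ((u (i+1) - u i) - (u (i+2) - u (i+1)))) / h ^ 2 := by
    apply div_nonneg _ hq.le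
    have := mul_nonneg (mul_nonneg hr.le (sub_nonneg.2 hrh)) (sub_nonneg.2 h1)
    have := mul_nonneg (mul_nonneg hr.le hr.le) (sub_nonneg.2 h2')
    linarith
  have heq : (u i + r * (u (i + 1) - u i) / h - (u (i - 1) + r * (u i - u (i - 1)) / h))
      - ((u i + 2 * r * (u (i + 1) - u i) / h + r ^ 2 * (u (i + 2) - 2 * u (i + 1) + u i) / h ^ 2)
      - (u (i - 1) + 2 * r * (u i - u (i - 1)) / h + r ^ 2 * (u (i + 1) - 2 * u i + u (i - 1)) / h ^ 2))
      = (r * (h - r) * ((u i - u (i-1)) - (u (i+1) - u i))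
      + r * r * ((u (i+1) - u i) - (u (i+2) - u (i+1)))) / h ^ 2 := by
    field_simp
    ring
  rw [heq]
  exact key
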